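/- Let f : ℝ → ℝ be a monotone nondecreasing, right-continuous function (a Stieltjes function) and let μ_f denote its Lebesgue–Stieltjes measure. Let K ⊆ ℝ be a compact set such that f is continuous at every point of K and such that the image f(K) is Lebesgue negligible (has one-dimensional Lebesgue measure zero). Then μ_f(K) = 0. -/

import Mathlib

open Set MeasureTheory Function

/-- Key estimate: if `V` is an order-connected subset of `ℝ`, then the Stieltjes measure of
`K ∩ f ⁻¹' V` is at most the volume of `V`, when `K` is compact and consists of continuity
points of `f`. -/
lemma stieltjes_aux (f : StieltjesFunction ℝ) (K : Set ℝ) (hK : IsCompact K)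
    (hcont : ∀ x ∈ K, ContinuousAt f x) (V : Set ℝ) (hV : V.OrdConnected) :
    f.measure (K ∩ f ⁻¹' V) ≤ volume V := by
  set S := K ∩ f ⁻¹' V with hSdef
  rcases S.eq_empty_or_nonempty with h | h
  · simp [h]
  have hSK : S ⊆ K := inter_subset_left
  have hbb : BddBelow S := hK.bddBelow.mono hSK
  have hba : BddAbove S := hK.bddAbove.mono hSK
  set a := sInf S with ha
  set b := sSup S with hb
  have hclK : closure S ⊆ K := hK.isClosed.closure_subset_iff.2 hSK
  have haS : a ∈ closure S := csInf_mem_closure h hbb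
  have hbS : b ∈ closure S := csSup_mem_closure h hba
  have haK : a ∈ K := hclK haS
  have hbK : b ∈ K := hclK hbS
  have himS : f '' S ⊆ V := by rintro _ ⟨y, hy, rfl⟩; exact hy.2
  have hfa : f a ∈ closure V :=
    closure_mono himS (((hcont a haK).continuousWithinAt (s := S)).mem_closure_image haS)
  have hfb : f b ∈ closure V :=
    closure_mono himS (((hcont b hbK).continuousWithinAt (s := S)).mem_closure_image hbS)
  have hIoo : Ioo (f a) (f b) ⊆ V := by
    intro y hy
    obtain ⟨p, hp1, hp2⟩ := mem_closure_iff.1 hfa (Iio y) isOpen_Iio hy.1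
    obtain ⟨q, hq1, hq2⟩ := mem_closure_iff.1 hfb (Ioi y) isOpen_Ioi hy.2
    exact hV.out hp2 hq2 ⟨le_of_lt hp1, le_of_lt hq1⟩
  have hleft : leftLim f a = f a :=
    f.mono.continuousWithinAt_Iio_iff_leftLim_eq.1 (hcont a haK).continuousWithinAt
  have hab : S ⊆ Icc a b := fun x hx => ⟨csInf_le hbb hx, le_csSup hba hx⟩
  calc f.measure S ≤ f.measure (Icc a b) := measure_mono hab
    _ = ENNReal.ofReal (f b - leftLim f a) := f.measure_Icc a b
    _ = ENNReal.ofReal (f b - f a) := by rw [hleft]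
    _ = volume (Ioo (f a) (f b)) := (Real.volume_Ioo).symm
    _ ≤ volume V := measure_mono hIoo

/-- If `f` is a Stieltjes function (monotone nondecreasing and right-continuous),
`K` is a compact set of continuity points of `f`, and the image `f '' K` is
Lebesgue negligible, then the Lebesgue–Stieltjes measure of `K` vanishes. -/
theorem stieltjes_measure_eq_zero_of_image_null
    (f : StieltjesFunction ℝ) (K : Set ℝ) (hK : IsCompact K)
    (hcont : ∀ x ∈ K, ContinuousAt f x)
    (himg : MeasureTheory.volume (f '' K) = 0) :
    f.measure K = 0 := by
  classical
  refine le_antisymm ?_ (zero_le (a := _))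
  refine ENNReal.le_of_forall_pos_le_add (fun ε hε _ => ?_)
  obtain ⟨U, hUK, hUo, hUε⟩ := Set.exists_isOpen_lt_of_lt (f '' K) ε
    (by rw [himg]; exact ENNReal.coe_pos.2 hε)
  have hmem : ∀ x ∈ K, f ⁻¹' connectedComponentIn U (f x) ∈ nhds x := fun x hx =>
    (hcont x hx).preimage_mem_nhds ((hUo.connectedComponentIn).mem_nhds
      (mem_connectedComponentIn (hUK (mem_image_of_mem f hx))))
  obtain ⟨t, htK, hcov⟩ := hK.elim_nhds_subcover _ hmem
  set s : Finset (Set ℝ) := t.image (fun x => connectedComponentIn U (f x)) with hs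
  have hcov' : K ⊆ ⋃ V ∈ s, K ∩ f ⁻¹' V := by
    intro x hx
    obtain ⟨y, hy, hxy⟩ := Set.mem_iUnion₂.1 (hcov hx)
    exact Set.mem_iUnion₂.2 ⟨connectedComponentIn U (f y),
      Finset.mem_image_of_mem _ hy, hx, hxy⟩
  have hVopen : ∀ V ∈ s, IsOpen V := by
    intro V hV
    obtain ⟨y, _, rfl⟩ := Finset.mem_image.1 hV
    exact hUo.connectedComponentIn
  have hVsub : ∀ V ∈ s, V ⊆ U := by
    intro V hV
    obtain ⟨y, _, rfl⟩ := Finset.mem_image.1 hV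
    exact connectedComponentIn_subset U _
  have hdisj : Set.PairwiseDisjoint (↑s : Set (Set ℝ)) id := by
    intro V hV W hW hVW
    obtain ⟨y, _, rfl⟩ := Finset.mem_image.1 (Finset.mem_coe.1 hV)
    obtain ⟨z, _, rfl⟩ := Finset.mem_image.1 (Finset.mem_coe.1 hW)
    by_contra hnd
    obtain ⟨u, hu1, hu2⟩ := Set.not_disjoint_iff.1 hnd
    exact hVW ((connectedComponentIn_eq hu1).trans (connectedComponentIn_eq hu2).symm)
  calc f.measure K ≤ f.measure (⋃ V ∈ s, K ∩ f ⁻¹' V) := measure_mono hcov'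
    _ ≤ ∑ V ∈ s, f.measure (K ∩ f ⁻¹' V) := measure_biUnion_finset_le _ _
    _ ≤ ∑ V ∈ s, volume V := by
        refine Finset.sum_le_sum fun V hV => ?_
        obtain ⟨y, _, rfl⟩ := Finset.mem_image.1 hV
        exact stieltjes_aux f K hK hcont _
          (isPreconnected_connectedComponentIn.ordConnected)
    _ = volume (⋃ V ∈ s, V) :=
        (measure_biUnion_finset hdisj (fun V hV => (hVopen V hV).measurableSet)).symm
    _ ≤ volume U := measure_mono (Set.iUnion₂_subset hVsub)
    _ ≤ 0 + ε := by rw [zero_add]; exact hUε.le
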